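/- Let n ≥ 1, let H be a Hermitian n×n complex matrix, let ρ₀ be an n×n complex matrix, and let μ, σ : ℝ → ℝ be functions differentiable at every τ > 0 with σ(τ) > 0 for τ > 0. For τ > 0 define the matrix-valued Bochner integral ρ(τ) = ∫_ℝ (2π σ(τ)²)^{-1/2} exp(-(ξ - μ(τ))²/(2σ(τ)²)) · (exp(-i ξ τ H) * ρ₀ * exp(i ξ τ H)) dξ, where exp denotes the matrix exponential. Then for every τ > 0, ρ is differentiable at τ and ρ'(τ) = -i ω(τ) [H, ρ(τ)] - (Γ(τ)/2) [H, [H, ρ(τ)]], where ω(τ) = μ(τ) + τ μ'(τ), Γ(τ) = 2 σ(τ)² τ (1 + τ σ'(τ)/σ(τ)), and [A,B] = A*B - B*A denotes the matrix commutator. -/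

import Mathlib

open MeasureTheory

attribute [local instance] Matrix.normedAddCommGroup Matrix.normedSpace



open MeasureTheory Complex

lemma gauss_pointwise (σ μ t : ℝ) (hσ : 0 < σ) (ξ : ℝ) :
    ((((Real.sqrt (2 * Real.pi * σ ^ 2))⁻¹ *
        Real.exp (-(ξ - μ) ^ 2 / (2 * σ ^ 2)) : ℝ)) : ℂ) *
      Complex.exp (-(Complex.I) * ξ * t) =
    (((Real.sqrt (2 * Real.pi * σ ^ 2))⁻¹ : ℝ) : ℂ) *
      Complex.exp ((-(1/(2*σ^2)) : ℂ) * ξ ^ 2 +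
        ((μ/σ^2 : ℝ) - Complex.I * t) * ξ + ((-(μ^2/(2*σ^2)) : ℝ) : ℂ)) := by
  have hσ2 : (σ : ℂ) ≠ 0 := by exact_mod_cast hσ.ne'
  push_cast [← Complex.exp_add]
  rw [mul_assoc]
  congr 1
  rw [← Complex.exp_add]
  congr 1
  have h6 : (σ:ℂ)^6 * ((σ:ℂ)⁻¹)^6 = 1 := by
    rw [← mul_pow, mul_inv_cancel₀ hσ2, one_pow]
  field_simp
  ring

lemma gauss_integrable (σ μ t : ℝ) (hσ : 0 < σ) :
    Integrable (fun ξ : ℝ =>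
      ((((Real.sqrt (2 * Real.pi * σ ^ 2))⁻¹ *
          Real.exp (-(ξ - μ) ^ 2 / (2 * σ ^ 2)) : ℝ)) : ℂ) *
        Complex.exp (-(Complex.I) * ξ * t)) := by
  have hb : ((-(1/(2*σ^2)) : ℂ)).re < 0 := by
    have h : (-(1/(2*σ^2)) : ℂ) = ((-(1/(2*σ^2)) : ℝ) : ℂ) := by push_cast; ring
    rw [h, Complex.ofReal_re]
    have : (0:ℝ) < 1/(2*σ^2) := by positivity
    linarith
  have := (integrable_cexp_quadratic' hb ((μ/σ^2 : ℝ) - Complex.I * t)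
    ((-(μ^2/(2*σ^2)) : ℝ) : ℂ)).const_mul
    ((((Real.sqrt (2 * Real.pi * σ ^ 2))⁻¹ : ℝ) : ℂ))
  refine this.congr ?_
  filter_upwards with ξ
  exact (gauss_pointwise σ μ t hσ ξ).symm

lemma gauss_integral (σ μ t : ℝ) (hσ : 0 < σ) :
    (∫ ξ : ℝ,
      ((((Real.sqrt (2 * Real.pi * σ ^ 2))⁻¹ *
          Real.exp (-(ξ - μ) ^ 2 / (2 * σ ^ 2)) : ℝ)) : ℂ) *
        Complex.exp (-(Complex.I) * ξ * t)) =
    Complex.exp (-(Complex.I) * μ * t - σ ^ 2 * t ^ 2 / 2) := by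
  have hσ2 : (σ : ℂ) ≠ 0 := by exact_mod_cast hσ.ne'
  have hb : ((-(1/(2*σ^2)) : ℂ)).re < 0 := by
    have h : (-(1/(2*σ^2)) : ℂ) = ((-(1/(2*σ^2)) : ℝ) : ℂ) := by push_cast; ring
    rw [h, Complex.ofReal_re]
    have : (0:ℝ) < 1/(2*σ^2) := by positivity
    linarith
  simp_rw [gauss_pointwise σ μ t hσ]
  rw [MeasureTheory.integral_const_mul,
    integral_cexp_quadratic hb ((μ/σ^2 : ℝ) - Complex.I * t) ((-(μ^2/(2*σ^2)) : ℝ) : ℂ)]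
  have hpos : (0:ℝ) < 2 * Real.pi * σ ^ 2 := by positivity
  have h1 : (↑Real.pi / -(-(1/(2*σ^2)) : ℂ)) = ((2 * Real.pi * σ ^ 2 : ℝ) : ℂ) := by
    push_cast
    field_simp
  have h2 : ((2 * Real.pi * σ ^ 2 : ℝ) : ℂ) ^ (1/2 : ℂ) =
      ((Real.sqrt (2 * Real.pi * σ ^ 2) : ℝ) : ℂ) := by
    rw [Real.sqrt_eq_rpow, Complex.ofReal_cpow hpos.le]
    norm_num
  have hsqrt : (Real.sqrt (2 * Real.pi * σ ^ 2)) ≠ 0 := by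
    positivity
  rw [h1, h2]
  rw [show ∀ a b : ℂ, a * (b * Complex.exp _) = (a * b) * Complex.exp _ from fun a b => (mul_assoc a b _).symm]
  rw [show ((((Real.sqrt (2 * Real.pi * σ ^ 2))⁻¹ : ℝ)) : ℂ) * ((Real.sqrt (2 * Real.pi * σ ^ 2) : ℝ) : ℂ) = 1 by
    rw [← Complex.ofReal_mul, inv_mul_cancel₀ hsqrt, Complex.ofReal_one]]
  rw [one_mul]
  congr 1
  have hI : Complex.I ^ 2 = -1 := Complex.I_sq
  push_cast
  field_simp
  ring_nf
  rw [hI]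
  ring

open Matrix in
lemma exp_smul_hermitian {n : ℕ} (H : Matrix (Fin n) (Fin n) ℂ) (hH : H.IsHermitian) (z : ℂ) :
    NormedSpace.exp (z • H) =
      (hH.eigenvectorUnitary : Matrix (Fin n) (Fin n) ℂ) *
        Matrix.diagonal (fun i => Complex.exp (z * hH.eigenvalues i)) *
        star (hH.eigenvectorUnitary : Matrix (Fin n) (Fin n) ℂ) := by
  set V : Matrix (Fin n) (Fin n) ℂ := (hH.eigenvectorUnitary : Matrix (Fin n) (Fin n) ℂ) with hV
  have h1 : star V * V = 1 := Matrix.UnitaryGroup.star_mul_self _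
  have hinv : V⁻¹ = star V := Matrix.inv_eq_left_inv h1
  have hU : IsUnit V := by
    apply Matrix.isUnit_iff_isUnit_det _ |>.mpr
    have : V * star V = 1 := Matrix.mem_unitaryGroup_iff.mp hH.eigenvectorUnitary.2
    exact Matrix.isUnit_det_of_right_inverse this
  have hspec : z • H = V * Matrix.diagonal (fun i => z * (hH.eigenvalues i : ℂ)) * V⁻¹ := by
    have hd : z • Matrix.diagonal (RCLike.ofReal ∘ hH.eigenvalues : Fin n → ℂ) =
        Matrix.diagonal (fun i => z * (hH.eigenvalues i : ℂ)) := by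
      rw [← Matrix.diagonal_smul]
      congr 1
    rw [hinv]
    conv_lhs => rw [hH.spectral_theorem, Unitary.conjStarAlgAut_apply]
    rw [← Matrix.smul_mul, ← Matrix.mul_smul, hd]
  rw [hspec, Matrix.exp_conj V _ hU, Matrix.exp_diagonal, hinv]
  congr 2
  funext i
  rw [Pi.exp_def, ← Complex.exp_eq_exp_ℂ]

open Matrix in
lemma conj_decomp {n : ℕ} (H ρ₀ : Matrix (Fin n) (Fin n) ℂ) (hH : H.IsHermitian) (s ξ : ℝ) :
    NormedSpace.exp ((-(Complex.I) * (ξ:ℂ) * (s:ℂ)) • H) * ρ₀ *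
      NormedSpace.exp ((Complex.I * (ξ:ℂ) * (s:ℂ)) • H) =
    ∑ j, ∑ k, Complex.exp (-(Complex.I) * (ξ:ℂ) *
        ((s * (hH.eigenvalues j - hH.eigenvalues k) : ℝ) : ℂ)) •
      ((hH.eigenvectorUnitary : Matrix (Fin n) (Fin n) ℂ) *
        Matrix.single j k
          ((star (hH.eigenvectorUnitary : Matrix (Fin n) (Fin n) ℂ) * ρ₀ *
            (hH.eigenvectorUnitary : Matrix (Fin n) (Fin n) ℂ)) j k) *
        star (hH.eigenvectorUnitary : Matrix (Fin n) (Fin n) ℂ)) := by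
  set V : Matrix (Fin n) (Fin n) ℂ := (hH.eigenvectorUnitary : Matrix (Fin n) (Fin n) ℂ) with hV
  have h1 : star V * V = 1 := Matrix.UnitaryGroup.star_mul_self _
  set B : Matrix (Fin n) (Fin n) ℂ := star V * ρ₀ * V with hB
  set lam := hH.eigenvalues with hlam
  set D₁ : Matrix (Fin n) (Fin n) ℂ :=
    Matrix.diagonal (fun i => Complex.exp (-(Complex.I) * (ξ:ℂ) * (s:ℂ) * lam i)) with hD₁
  set D₂ : Matrix (Fin n) (Fin n) ℂ :=
    Matrix.diagonal (fun i => Complex.exp (Complex.I * (ξ:ℂ) * (s:ℂ) * lam i)) with hD₂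
  have hstep : NormedSpace.exp ((-(Complex.I) * (ξ:ℂ) * (s:ℂ)) • H) * ρ₀ *
      NormedSpace.exp ((Complex.I * (ξ:ℂ) * (s:ℂ)) • H) = V * (D₁ * B * D₂) * star V := by
    rw [exp_smul_hermitian H hH, exp_smul_hermitian H hH, hB]
    simp only [← hV, ← hlam, ← hD₁, ← hD₂]
    have : V * D₁ * star V * ρ₀ * (V * D₂ * star V)
        = V * (D₁ * (star V * ρ₀ * V) * D₂) * star V := by
      simp only [Matrix.mul_assoc]
    rw [this]
  rw [hstep]
  conv_lhs => rw [matrix_eq_sum_single (D₁ * B * D₂)]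
  rw [Finset.mul_sum, Finset.sum_mul]
  refine Finset.sum_congr rfl fun j _ => ?_
  rw [Finset.mul_sum, Finset.sum_mul]
  refine Finset.sum_congr rfl fun k _ => ?_
  have hentry : (D₁ * B * D₂) j k =
      Complex.exp (-(Complex.I) * (ξ:ℂ) * ((s * (lam j - lam k) : ℝ) : ℂ)) * B j k := by
    rw [Matrix.mul_diagonal, Matrix.diagonal_mul, mul_right_comm, ← Complex.exp_add]
    congr 2
    push_cast
    ring
  have hstd : Complex.exp (-(Complex.I) * (ξ:ℂ) * ((s * (lam j - lam k) : ℝ) : ℂ)) •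
        Matrix.single j k (B j k) =
      Matrix.single j k
        (Complex.exp (-(Complex.I) * (ξ:ℂ) * ((s * (lam j - lam k) : ℝ) : ℂ)) * B j k) := by
    rw [Matrix.smul_single, smul_eq_mul]
  rw [hentry, ← hstd, Matrix.mul_smul, Matrix.smul_mul]

open Matrix in
lemma conj_conj {n : ℕ} (V : Matrix (Fin n) (Fin n) ℂ) (h1 : star V * V = 1)
    (A B : Matrix (Fin n) (Fin n) ℂ) :
    (V * A * star V) * (V * B * star V) = V * (A * B) * star V := by
  have h : star V * (V * (B * star V)) = B * star V := by
    rw [← Matrix.mul_assoc, h1, Matrix.one_mul]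
  simp only [Matrix.mul_assoc, h]

lemma diag_mul_std {n : ℕ} (d : Fin n → ℂ) (j k : Fin n) (b : ℂ) :
    Matrix.diagonal d * Matrix.single j k b = Matrix.single j k (d j * b) := by
  ext i i'
  rw [Matrix.diagonal_mul]
  simp only [Matrix.single, Matrix.of_apply]
  split_ifs with h
  · rw [h.1]
  · rw [mul_zero]

lemma std_mul_diag {n : ℕ} (d : Fin n → ℂ) (j k : Fin n) (b : ℂ) :
    Matrix.single j k b * Matrix.diagonal d = Matrix.single j k (b * d k) := by
  ext i i'
  rw [Matrix.mul_diagonal]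
  simp only [Matrix.single, Matrix.of_apply]
  split_ifs with h
  · rw [h.2]
  · rw [zero_mul]


/-- **Theorem 1 (classical simulation of a dephasing channel).**
Gaussian averaging of unitary conjugations `e^{-iξτH} ρ₀ e^{iξτH}`, with the
frequency `ξ` drawn from the normal density `(2πσ(τ)²)^{-1/2} exp(-(ξ-μ(τ))²/(2σ(τ)²))`,
yields a state obeying a master equation with effective frequency
`ω(τ) = μ(τ) + τ μ'(τ)` and effective dephasing rate
`Γ(τ) = 2 σ(τ)² τ (1 + τ σ'(τ)/σ(τ))`. -/
theorem gaussian_mixture_of_unitaries_master_equation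
    (n : ℕ) (hn : 1 ≤ n)
    (H ρ₀ : Matrix (Fin n) (Fin n) ℂ) (hH : H.IsHermitian)
    (μ σ μ' σ' : ℝ → ℝ)
    (hμ : ∀ τ > (0 : ℝ), HasDerivAt μ (μ' τ) τ)
    (hσ : ∀ τ > (0 : ℝ), HasDerivAt σ (σ' τ) τ)
    (hσpos : ∀ τ > (0 : ℝ), 0 < σ τ)
    (ρ : ℝ → Matrix (Fin n) (Fin n) ℂ)
    (hρ : ∀ τ > (0 : ℝ), ρ τ =
      ∫ ξ : ℝ,
        ((Real.sqrt (2 * Real.pi * (σ τ) ^ 2))⁻¹ *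
            Real.exp (-(ξ - μ τ) ^ 2 / (2 * (σ τ) ^ 2))) •
          (NormedSpace.exp ((-(Complex.I) * (ξ : ℂ) * (τ : ℂ)) • H) * ρ₀ *
            NormedSpace.exp ((Complex.I * (ξ : ℂ) * (τ : ℂ)) • H)))
    (ω Γ : ℝ → ℝ)
    (hω : ∀ τ > (0 : ℝ), ω τ = μ τ + τ * μ' τ)
    (hΓ : ∀ τ > (0 : ℝ), Γ τ = 2 * (σ τ) ^ 2 * τ * (1 + τ * σ' τ / σ τ)) :
    ∀ τ > (0 : ℝ),
      HasDerivAt ρ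
        ((-(Complex.I) * (ω τ : ℂ)) • (H * ρ τ - ρ τ * H) -
          ((Γ τ : ℂ) / 2) •
            (H * (H * ρ τ - ρ τ * H) - (H * ρ τ - ρ τ * H) * H)) τ := by
  intro τ hτ
  set V : Matrix (Fin n) (Fin n) ℂ := (hH.eigenvectorUnitary : Matrix (Fin n) (Fin n) ℂ) with hV
  set lam := hH.eigenvalues with hlam
  have h1 : star V * V = 1 := Matrix.UnitaryGroup.star_mul_self _
  set B : Matrix (Fin n) (Fin n) ℂ := star V * ρ₀ * V with hB
  set C : Fin n → Fin n → Matrix (Fin n) (Fin n) ℂ :=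
    fun j k => V * Matrix.single j k (B j k) * star V with hC
  set g : Fin n → Fin n → ℝ → ℂ := fun j k s =>
    Complex.exp (-(Complex.I) * ((μ s : ℝ) : ℂ) * ((s * (lam j - lam k) : ℝ) : ℂ) -
      ((σ s : ℝ) : ℂ) ^ 2 * ((s * (lam j - lam k) : ℝ) : ℂ) ^ 2 / 2) with hg
  -- Step 1: representation of ρ on (0, ∞)
  have hrep : ∀ s : ℝ, 0 < s → ρ s = ∑ j, ∑ k, g j k s • C j k := by
    intro s hs
    rw [hρ s hs]
    have hpt : ∀ ξ : ℝ,
        (((Real.sqrt (2 * Real.pi * (σ s) ^ 2))⁻¹ *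
            Real.exp (-(ξ - μ s) ^ 2 / (2 * (σ s) ^ 2))) : ℝ) •
          (NormedSpace.exp ((-(Complex.I) * (ξ : ℂ) * (s : ℂ)) • H) * ρ₀ *
            NormedSpace.exp ((Complex.I * (ξ : ℂ) * (s : ℂ)) • H)) =
        ∑ j, ∑ k,
          (((((Real.sqrt (2 * Real.pi * (σ s) ^ 2))⁻¹ *
              Real.exp (-(ξ - μ s) ^ 2 / (2 * (σ s) ^ 2))) : ℝ) : ℂ) *
            Complex.exp (-(Complex.I) * (ξ : ℂ) *
              ((s * (lam j - lam k) : ℝ) : ℂ))) • C j k := by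
      intro ξ
      rw [conj_decomp H ρ₀ hH s ξ, Finset.smul_sum]
      refine Finset.sum_congr rfl fun j _ => ?_
      rw [Finset.smul_sum]
      refine Finset.sum_congr rfl fun k _ => ?_
      rw [← smul_assoc, Complex.real_smul]
    simp only [hpt]
    have hint : ∀ j k : Fin n, @Integrable (Matrix (Fin n) (Fin n) ℂ)
        (PseudoMetricSpace.toUniformSpace).toTopologicalSpace _ ℝ _ (fun ξ : ℝ =>
        (((((Real.sqrt (2 * Real.pi * (σ s) ^ 2))⁻¹ *
            Real.exp (-(ξ - μ s) ^ 2 / (2 * (σ s) ^ 2))) : ℝ) : ℂ) *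
          Complex.exp (-(Complex.I) * (ξ : ℂ) *
            ((s * (lam j - lam k) : ℝ) : ℂ))) • C j k) volume := fun j k =>
      (gauss_integrable (σ s) (μ s) (s * (lam j - lam k)) (hσpos s hs)).smul_const (C j k)
    rw [MeasureTheory.integral_finset_sum _
      (fun j _ => integrable_finset_sum _ (fun k _ => hint j k))]
    refine Finset.sum_congr rfl fun j _ => ?_
    rw [MeasureTheory.integral_finset_sum _ (fun k _ => hint j k)]
    refine Finset.sum_congr rfl fun k _ => ?_
    rw [integral_smul_const,
      gauss_integral (σ s) (μ s) (s * (lam j - lam k)) (hσpos s hs)]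
  -- coefficients
  set coef : Fin n → Fin n → ℂ := fun j k =>
    -(Complex.I) * (ω τ : ℂ) * ((lam j - lam k : ℝ) : ℂ) -
      (Γ τ : ℂ) / 2 * ((lam j - lam k : ℝ) : ℂ) ^ 2 with hcoef
  -- Step 2: derivative of each scalar coefficient
  have hσne : (σ τ : ℝ) ≠ 0 := (hσpos τ hτ).ne'
  have hderiv : ∀ j k : Fin n,
      HasDerivAt (g j k) (coef j k * g j k τ) τ := by
    intro j k
    set Δ : ℝ := lam j - lam k with hΔ
    have hμc : HasDerivAt (fun s : ℝ => ((μ s : ℝ) : ℂ)) ((μ' τ : ℝ) : ℂ) τ :=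
      (hμ τ hτ).ofReal_comp
    have hσc : HasDerivAt (fun s : ℝ => ((σ s : ℝ) : ℂ)) ((σ' τ : ℝ) : ℂ) τ :=
      (hσ τ hτ).ofReal_comp
    have hsΔ : HasDerivAt (fun s : ℝ => ((s * Δ : ℝ) : ℂ)) ((Δ : ℝ) : ℂ) τ := by
      simpa using ((hasDerivAt_id τ).mul_const Δ).ofReal_comp
    have ht1 : HasDerivAt (fun s : ℝ => -(Complex.I) * ((μ s : ℝ) : ℂ) * ((s * Δ : ℝ) : ℂ))
        ((-(Complex.I) * ((μ' τ : ℝ) : ℂ)) * ((τ * Δ : ℝ) : ℂ) +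
          (-(Complex.I) * ((μ τ : ℝ) : ℂ)) * ((Δ : ℝ) : ℂ)) τ :=
      (hμc.const_mul (-(Complex.I))).mul hsΔ
    have hσsq : HasDerivAt (fun s : ℝ => ((σ s : ℝ) : ℂ) ^ 2)
        (((σ' τ : ℝ) : ℂ) * ((σ τ : ℝ) : ℂ) + ((σ τ : ℝ) : ℂ) * ((σ' τ : ℝ) : ℂ)) τ := by
      simpa [pow_two, Pi.mul_def] using hσc.mul hσc
    have hsq : HasDerivAt (fun s : ℝ => ((s * Δ : ℝ) : ℂ) ^ 2)
        (((Δ : ℝ) : ℂ) * ((τ * Δ : ℝ) : ℂ) + ((τ * Δ : ℝ) : ℂ) * ((Δ : ℝ) : ℂ)) τ := by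
      simpa [pow_two, Pi.mul_def] using hsΔ.mul hsΔ
    have ht2 := (hσsq.mul hsq).div_const 2
    have hφ := (ht1.sub ht2).cexp
    convert hφ using 1
    · rfl
    have hωτ := hω τ hτ
    have hΓτ := hΓ τ hτ
    rw [hcoef, hωτ, hΓτ]
    have hgτ : g j k τ = Complex.exp (-(Complex.I) * ((μ τ : ℝ) : ℂ) * ((τ * Δ : ℝ) : ℂ) -
        ((σ τ : ℝ) : ℂ) ^ 2 * ((τ * Δ : ℝ) : ℂ) ^ 2 / 2) := rfl
    rw [hgτ, mul_comm]
    congr 1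
    have hσc2 : ((σ τ : ℝ) : ℂ) ≠ 0 := by exact_mod_cast hσne
    push_cast
    field_simp
    rw [hΔ]
    push_cast
    ring
  -- Step 3: derivative of the sum
  have hS : HasDerivAt (fun s => ∑ j, ∑ k, g j k s • C j k)
      (∑ j, ∑ k, (coef j k * g j k τ) • C j k) τ := by
    refine HasDerivAt.fun_sum fun j _ => HasDerivAt.fun_sum fun k _ => ?_
    exact (hderiv j k).smul_const (C j k)
  have heq : ρ =ᶠ[nhds τ] fun s => ∑ j, ∑ k, g j k s • C j k := by
    filter_upwards [isOpen_Ioi.mem_nhds hτ] with s hs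
    exact hrep s hs
  have hρd : HasDerivAt ρ (∑ j, ∑ k, (coef j k * g j k τ) • C j k) τ :=
    hS.congr_of_eventuallyEq heq
  -- Step 4: identify the derivative with the master-equation RHS
  have hHC : ∀ j k : Fin n, H * C j k = ((lam j : ℝ) : ℂ) • C j k := by
    intro j k
    show H * (V * Matrix.single j k (B j k) * star V) =
      ((lam j : ℝ) : ℂ) • (V * Matrix.single j k (B j k) * star V)
    conv_lhs => rw [hH.spectral_theorem, Unitary.conjStarAlgAut_apply]
    rw [← hV, ← hlam, conj_conj V h1, diag_mul_std]
    rw [← Matrix.smul_mul, ← Matrix.mul_smul, Matrix.smul_single, smul_eq_mul]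
    rfl
  have hCH : ∀ j k : Fin n, C j k * H = ((lam k : ℝ) : ℂ) • C j k := by
    intro j k
    show (V * Matrix.single j k (B j k) * star V) * H =
      ((lam k : ℝ) : ℂ) • (V * Matrix.single j k (B j k) * star V)
    conv_lhs => rw [hH.spectral_theorem, Unitary.conjStarAlgAut_apply]
    rw [← hV, ← hlam, conj_conj V h1, std_mul_diag]
    rw [← Matrix.smul_mul, ← Matrix.mul_smul, Matrix.smul_single, smul_eq_mul]
    rw [mul_comm]
    rfl
  have hcomm : ∀ c : Fin n → Fin n → ℂ,
      H * (∑ j, ∑ k, c j k • C j k) - (∑ j, ∑ k, c j k • C j k) * H =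
        ∑ j, ∑ k, ((((lam j : ℝ) : ℂ) - ((lam k : ℝ) : ℂ)) * c j k) • C j k := by
    intro c
    rw [Finset.mul_sum, Finset.sum_mul, ← Finset.sum_sub_distrib]
    refine Finset.sum_congr rfl fun j _ => ?_
    rw [Finset.mul_sum, Finset.sum_mul, ← Finset.sum_sub_distrib]
    refine Finset.sum_congr rfl fun k _ => ?_
    rw [Matrix.mul_smul, Matrix.smul_mul, hHC j k, hCH j k, smul_smul, smul_smul, ← sub_smul]
    congr 1
    ring
  have hval :
      (-(Complex.I) * (ω τ : ℂ)) • (H * ρ τ - ρ τ * H) -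
        ((Γ τ : ℂ) / 2) • (H * (H * ρ τ - ρ τ * H) - (H * ρ τ - ρ τ * H) * H) =
      ∑ j, ∑ k, (coef j k * g j k τ) • C j k := by
    rw [hrep τ hτ, hcomm (fun j k => g j k τ)]
    rw [hcomm (fun j k => (((lam j : ℝ) : ℂ) - ((lam k : ℝ) : ℂ)) * g j k τ)]
    rw [Finset.smul_sum, Finset.smul_sum, ← Finset.sum_sub_distrib]
    refine Finset.sum_congr rfl fun j _ => ?_
    rw [Finset.smul_sum, Finset.smul_sum, ← Finset.sum_sub_distrib]
    refine Finset.sum_congr rfl fun k _ => ?_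
    rw [smul_smul, smul_smul, ← sub_smul]
    congr 1
    rw [hcoef]
    push_cast
    ring
  rw [hval]
  exact hρd
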